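/- Let E be a real Banach space and let F, G ⊆ E* be weak-star closed linear subspaces of the continuous dual such that F is finite-dimensional and E* = F ⊕ G. Then the pre-annihilator G₀ ⊆ E is finite-dimensional with dim(G₀) = dim(F), and moreover (F₀)⁰ = F and (G₀)⁰ = G, where for a subspace W ⊆ E we write W⁰ = {ℓ ∈ E* : ℓ(w) = 0 for all w ∈ W}. -/

import Mathlib

open NormedSpace

noncomputable section

/-- The annihilator of a subspace `W ⊆ E` in the continuous dual `E*`. -/
def ann {E : Type*} [NormedAddCommGroup E] [NormedSpace ℝ E]
    (W : Submodule ℝ E) : Submodule ℝ (StrongDual ℝ E) where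
  carrier := {ℓ | ∀ w ∈ W, ℓ w = 0}
  add_mem' := by
    intro a b ha hb w hw
    simp [ha w hw, hb w hw]
  zero_mem' := by
    intro w hw
    simp
  smul_mem' := by
    intro c ℓ hℓ w hw
    simp [hℓ w hw]

/-- The pre-annihilator of a subspace `H ⊆ E*` in `E`. -/
def preAnn {E : Type*} [NormedAddCommGroup E] [NormedSpace ℝ E]
    (H : Submodule ℝ (StrongDual ℝ E)) : Submodule ℝ E where
  carrier := {x | ∀ ℓ ∈ H, ℓ x = 0}
  add_mem' := by
    intro a b ha hb ℓ hℓ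
    simp [ha ℓ hℓ, hb ℓ hℓ]
  zero_mem' := by
    intro ℓ hℓ
    simp
  smul_mem' := by
    intro c x hx ℓ hℓ
    simp [hx ℓ hℓ]

/-- A subspace of the continuous dual is weak-star closed if its image in `WeakDual ℝ E`
(the dual with the topology of pointwise convergence on `E`) is closed. -/
def IsWeakStarClosed {E : Type*} [NormedAddCommGroup E] [NormedSpace ℝ E]
    (H : Submodule ℝ (StrongDual ℝ E)) : Prop :=
  IsClosed (StrongDual.toWeakDual '' (H : Set (StrongDual ℝ E)))

/-- The relative projection constant of a subspace `W` of a normed space `Y`: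
the infimum of the operator norms of continuous linear projections of `Y` onto `W`. -/
def relProjConst {Y : Type*} [NormedAddCommGroup Y] [NormedSpace ℝ Y]
    (W : Submodule ℝ Y) : ℝ :=
  sInf {c | ∃ P : Y →L[ℝ] Y, P.comp P = P ∧ LinearMap.range (P : Y →ₗ[ℝ] Y) = W ∧ ‖P‖ = c}

end

section Aux

open NormedSpace

variable {E' : Type*} [NormedAddCommGroup E'] [NormedSpace ℝ E']

instance : LocallyConvexSpace ℝ (WeakDual ℝ E') :=
  WeakBilin.locallyConvexSpace (B := topDualPairing ℝ E')

/-- Every continuous linear functional on `WeakDual ℝ E` is evaluation at a point of `E`. -/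
lemma weakDual_dual_eval (φ : WeakDual ℝ E' →L[ℝ] ℝ) :
    ∃ x : E', ∀ ℓ : StrongDual ℝ E', φ ℓ = ℓ x := by
  set B := topDualPairing ℝ E' with hB
  have hcont : Continuous φ := φ.continuous
  have h0 : φ ⁻¹' Metric.ball (0 : ℝ) 1 ∈ nhds (0 : WeakDual ℝ E') := by
    have : Metric.ball (0 : ℝ) 1 ∈ nhds (φ 0) := by
      simp [Metric.ball_mem_nhds]
    exact hcont.continuousAt.preimage_mem_nhds this
  obtain ⟨U, hU, hUsub⟩ := (B.hasBasis_weakBilin.mem_iff).1 h0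
  obtain ⟨s, r, hr, rfl⟩ := (SeminormFamily.basisSets_iff _).1 hU
  have key : ∀ ℓ : StrongDual ℝ E', (∀ y ∈ s, ℓ y = 0) → φ ℓ = 0 := by
    intro ℓ hℓ
    by_contra hne
    have hmem : ∀ t : ℝ, (t • ℓ : StrongDual ℝ E') ∈ Seminorm.ball (s.sup B.toSeminormFamily) 0 r := by
      intro t
      rw [Seminorm.mem_ball_zero]
      have : (s.sup B.toSeminormFamily) (t • ℓ) = 0 := by
        apply le_antisymm _ (apply_nonneg _ _)
        apply Seminorm.finset_sup_apply_le le_rfl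
        intro y hy
        simp [LinearMap.toSeminormFamily_apply, hB, topDualPairing_apply, hℓ y hy]
      simpa [this] using hr
    have hb : ∀ t : ℝ, |t * φ ℓ| < 1 := by
      intro t
      have := hUsub (hmem t)
      replace this := Set.mem_preimage.mp this
      rw [Metric.mem_ball, Real.dist_eq, sub_zero] at this
      have e : φ (t • ℓ) = t * φ ℓ := φ.map_smul t ℓ
      rw [e] at this
      exact this
    have := hb (2 / φ ℓ)
    rw [div_mul_cancel₀ _ hne] at this
    norm_num at this
  have hker : ⨅ y : s, LinearMap.ker (B.flip (y : E')) ≤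
      LinearMap.ker (φ : WeakDual ℝ E' →ₗ[ℝ] ℝ) := by
    intro ℓ hℓ
    simp only [Submodule.mem_iInf, LinearMap.mem_ker] at hℓ ⊢
    exact key ℓ (fun y hy => hℓ ⟨y, hy⟩)
  have hspan := mem_span_of_iInf_ker_le_ker (𝕜 := ℝ) hker
  have hle : Submodule.span ℝ (Set.range fun y : s => B.flip (y : E')) ≤
      LinearMap.range B.flip := by
    rw [Submodule.span_le]
    rintro _ ⟨y, rfl⟩
    exact LinearMap.mem_range_self _ _
  obtain ⟨x, hx⟩ := hle hspan
  exact ⟨x, fun ℓ => by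
    have := congrFun (congrArg (fun f : StrongDual ℝ E' →ₗ[ℝ] ℝ => (f : StrongDual ℝ E' → ℝ)) hx) ℓ
    have h := this.symm
    simp [hB, topDualPairing_apply] at h
    exact h⟩

lemma sep_of_weakStarClosed {H : Submodule ℝ (StrongDual ℝ E')}
    (hH : IsWeakStarClosed H)
    {ℓ : StrongDual ℝ E'} (hℓ : ℓ ∉ H) : ∃ x ∈ preAnn H, ℓ x ≠ 0 := by
  have hH' : IsClosed (StrongDual.toWeakDual '' (H : Set (StrongDual ℝ E'))) := hH
  set s : Set (WeakDual ℝ E') := StrongDual.toWeakDual '' (H : Set (StrongDual ℝ E')) with hs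
  have hconv : Convex ℝ s := by
    have : s = ((H.map (StrongDual.toWeakDual (𝕜 := ℝ) (E := E')).toLinearMap :
        Submodule ℝ (WeakDual ℝ E')) : Set (WeakDual ℝ E')) := by
      simp [hs, Submodule.map_coe]
    rw [this]
    exact (H.map _).convex
  have hnot : StrongDual.toWeakDual ℓ ∉ s := by
    rintro ⟨m, hm, heq⟩
    rw [StrongDual.toWeakDual_inj] at heq
    exact hℓ (heq ▸ hm)
  obtain ⟨f, u, hfs, hfl⟩ := geometric_hahn_banach_closed_point hconv hH' hnot
  have hu : 0 < u := by
    have := hfs (StrongDual.toWeakDual 0) ⟨0, H.zero_mem, rfl⟩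
    simpa using this
  have hvanish : ∀ h ∈ H, f (StrongDual.toWeakDual h) = 0 := by
    intro h hh
    by_contra hne
    have hmem : ∀ t : ℝ, t * f (StrongDual.toWeakDual h) < u := by
      intro t
      have : (t • StrongDual.toWeakDual h) ∈ s := ⟨t • h, H.smul_mem t hh, by simp [map_smul]⟩
      have := hfs _ this
      simpa [map_smul, smul_eq_mul] using this
    have := hmem (2 * u / f (StrongDual.toWeakDual h))
    rw [div_mul_cancel₀ _ hne] at this
    linarith
  obtain ⟨x, hx⟩ := weakDual_dual_eval f
  refine ⟨x, fun m hm => ?_, ?_⟩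
  · have := hvanish m hm
    rw [← hx m]
    exact this
  · have : f (StrongDual.toWeakDual ℓ) ≠ 0 := (hu.trans hfl).ne'
    rw [← hx ℓ]
    exact this

lemma ann_preAnn_eq {H : Submodule ℝ (StrongDual ℝ E')}
    (hH : IsWeakStarClosed H) : ann (preAnn H) = H := by
  apply le_antisymm
  · intro ℓ hℓ
    by_contra hn
    obtain ⟨x, hx, hne⟩ := sep_of_weakStarClosed hH hn
    exact hne (hℓ x hx)
  · intro h hh x hx
    exact hx h hh

end Aux

/-- If `F, G ⊆ E*` are weak-star closed subspaces with `F` finite-dimensional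
and `E* = F ⊕ G`, then `G₀` is finite-dimensional with `dim G₀ = dim F`, and
`(F₀)⁰ = F` and `(G₀)⁰ = G`. -/
theorem preAnn_finrank_and_ann (E : Type*) [NormedAddCommGroup E] [NormedSpace ℝ E]
    [CompleteSpace E] (F G : Submodule ℝ (StrongDual ℝ E))
    (hFc : IsWeakStarClosed F) (hGc : IsWeakStarClosed G)
    (hFfd : FiniteDimensional ℝ F)
    (hinf : F ⊓ G = ⊥) (hsup : F ⊔ G = ⊤) :
    FiniteDimensional ℝ (preAnn G) ∧
      Module.finrank ℝ (preAnn G) = Module.finrank ℝ F ∧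
      ann (preAnn F) = F ∧ ann (preAnn G) = G := by
  have hG : ann (preAnn G) = G := ann_preAnn_eq hGc
  have hF : ann (preAnn F) = F := ann_preAnn_eq hFc
  let T : ↥F →ₗ[ℝ] Module.Dual ℝ ↥(preAnn G) :=
    LinearMap.mk₂ ℝ (fun f x => (f : StrongDual ℝ E) (x : E))
      (by intro f g x; simp) (by intro c f x; simp)
      (by intro f x y; simp) (by intro c f x; simp)
  have hTinj : Function.Injective T := by
    rw [injective_iff_map_eq_zero]
    intro f hf
    have hfG : (f : StrongDual ℝ E) ∈ G := by
      rw [← hG]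
      intro w hw
      have := DFunLike.congr_fun hf (⟨w, hw⟩ : ↥(preAnn G))
      simpa [T] using this
    have : (f : StrongDual ℝ E) ∈ F ⊓ G := Submodule.mem_inf.mpr ⟨f.2, hfG⟩
    rw [hinf, Submodule.mem_bot] at this
    exact Subtype.ext this
  have hSinj : Function.Injective T.flip := by
    rw [injective_iff_map_eq_zero]
    intro x hx
    have hall : ∀ ℓ : StrongDual ℝ E, ℓ (x : E) = 0 := by
      intro ℓ
      have hℓ : ℓ ∈ F ⊔ G := by rw [hsup]; trivial
      obtain ⟨f, hf, g, hg, rfl⟩ := Submodule.mem_sup.mp hℓ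
      have h1 : f (x : E) = 0 := by
        have := DFunLike.congr_fun hx (⟨f, hf⟩ : ↥F)
        simpa [T] using this
      have h2 : g (x : E) = 0 := x.2 g hg
      simp [h1, h2]
    exact Subtype.ext (eq_zero_of_forall_dual_eq_zero ℝ hall)
  haveI : Module.Free ℝ F := Module.Free.of_divisionRing ℝ F
  haveI : Module.Projective ℝ F := Module.Projective.of_free
  haveI : FiniteDimensional ℝ (↥F →ₗ[ℝ] ℝ) := Module.dual_finite
  have hfd : FiniteDimensional ℝ (preAnn G) :=
    FiniteDimensional.of_injective T.flip hSinj
  have h1 : Module.finrank ℝ (preAnn G) ≤ Module.finrank ℝ F := by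
    have := LinearMap.finrank_le_finrank_of_injective hSinj
    rw [show Module.finrank ℝ (↥F →ₗ[ℝ] ℝ) = Module.finrank ℝ F from Subspace.dual_finrank_eq (K := ℝ) (V := ↥F)] at this
    exact this
  have h2 : Module.finrank ℝ F ≤ Module.finrank ℝ (preAnn G) := by
    have := LinearMap.finrank_le_finrank_of_injective hTinj
    rwa [Subspace.dual_finrank_eq] at this
  exact ⟨hfd, le_antisymm h1 h2, hF, hG⟩
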